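/- Guaranteed decrease per successful REG iteration: assume (A2), let η₁ ∈ (0,1), γ > 0 and γ_max ≥ γ. Fix v ∈ ℝ^n, let s solve (J(v)ᵀJ(v) + γI) s = −J(v)ᵀ r(v), define m(s) = (1/2)‖J(v)s + r(v)‖² + (γ/2)‖s‖², and suppose 𝒥(v) − 𝒥(v + s) ≥ η₁·(𝒥(v) − m(s)) (a successful iteration). Then 𝒥(v) − 𝒥(v + s) ≥ η₁·‖∇𝒥(v)‖² / (2(L_r² + γ_max)). -/

import Mathlib

open scoped RealInnerProductSpace

/-- The nonlinear least-squares objective `𝒥(v) = (1/2)‖r(v)‖²`. -/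
noncomputable def nlsObj {n m : ℕ} (r : EuclideanSpace ℝ (Fin n) → EuclideanSpace ℝ (Fin m))
    (v : EuclideanSpace ℝ (Fin n)) : ℝ :=
  (1 / 2) * ‖r v‖ ^ 2

/-- The Jacobian `J(v)` of `r` at `v`, as a continuous linear map. -/
noncomputable def nlsJ {n m : ℕ} (r : EuclideanSpace ℝ (Fin n) → EuclideanSpace ℝ (Fin m))
    (v : EuclideanSpace ℝ (Fin n)) :
    EuclideanSpace ℝ (Fin n) →L[ℝ] EuclideanSpace ℝ (Fin m) :=
  fderiv ℝ r v

/-- The gradient `∇𝒥(v) = J(v)ᵀ r(v)`. -/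
noncomputable def nlsGrad {n m : ℕ} (r : EuclideanSpace ℝ (Fin n) → EuclideanSpace ℝ (Fin m))
    (v : EuclideanSpace ℝ (Fin n)) : EuclideanSpace ℝ (Fin n) :=
  ContinuousLinearMap.adjoint (nlsJ r v) (r v)

set_option maxHeartbeats 1000000 in
/-- Guaranteed decrease per successful REG iteration:
`𝒥(v) − 𝒥(v+s) ≥ η₁‖∇𝒥(v)‖²/(2(L_r² + γ_max))`. -/
theorem regularisation_successful_iteration_decrease
    {n m : ℕ} (hn : 0 < n) (hm : 0 < m)
    (r : EuclideanSpace ℝ (Fin n) → EuclideanSpace ℝ (Fin m))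
    (hr : ContDiff ℝ 1 r)
    -- (A2)
    (Lr : ℝ) (hLr : 0 < Lr) (hA2 : ∀ v w, ‖r v - r w‖ ≤ Lr * ‖v - w‖)
    (η₁ : ℝ) (hη₁ : η₁ ∈ Set.Ioo (0 : ℝ) 1)
    (γ γmax : ℝ) (hγ : 0 < γ) (hγmax : γ ≤ γmax)
    (v : EuclideanSpace ℝ (Fin n))
    (s : EuclideanSpace ℝ (Fin n))
    (hstep : ContinuousLinearMap.adjoint (nlsJ r v) (nlsJ r v s) + γ • s =
      -ContinuousLinearMap.adjoint (nlsJ r v) (r v))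
    -- the local model m(s) = (1/2)‖J(v)s + r(v)‖² + (γ/2)‖s‖²
    (mdl : EuclideanSpace ℝ (Fin n) → ℝ)
    (hmdl : ∀ sv, mdl sv = (1 / 2) * ‖nlsJ r v sv + r v‖ ^ 2 + (γ / 2) * ‖sv‖ ^ 2)
    -- a successful iteration
    (hsucc : η₁ * (nlsObj r v - mdl s) ≤ nlsObj r v - nlsObj r (v + s)) :
    η₁ * ‖nlsGrad r v‖ ^ 2 / (2 * (Lr ^ 2 + γmax)) ≤ nlsObj r v - nlsObj r (v + s) := by
  set J := nlsJ r v with hJ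
  set g := nlsGrad r v with hg
  have hγmax0 : 0 < Lr ^ 2 + γmax := by nlinarith [sq_nonneg Lr]
  -- inner product identity: ⟪J s, r v⟫ = ⟪s, g⟫
  have hinner : ⟪J s, r v⟫ = -(‖J s‖ ^ 2 + γ * ‖s‖ ^ 2) := by
    have h1 : ⟪J s, r v⟫ = ⟪s, ContinuousLinearMap.adjoint J (r v)⟫ :=
      (ContinuousLinearMap.adjoint_inner_right J s (r v)).symm
    have h2 : ContinuousLinearMap.adjoint J (r v) =
        -(ContinuousLinearMap.adjoint J (J s) + γ • s) := by
      rw [hstep]; simp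
    rw [h1, h2]
    rw [inner_neg_right, inner_add_right, inner_smul_right]
    have h3 : ⟪s, ContinuousLinearMap.adjoint J (J s)⟫ = ‖J s‖ ^ 2 := by
      rw [ContinuousLinearMap.adjoint_inner_right, real_inner_self_eq_norm_sq]
    rw [h3, real_inner_self_eq_norm_sq]
  -- the model decrease
  have hmd : nlsObj r v - mdl s = (1 / 2) * ‖J s‖ ^ 2 + (γ / 2) * ‖s‖ ^ 2 := by
    rw [hmdl s, nlsObj]
    have hexp : ‖J s + r v‖ ^ 2 = ‖J s‖ ^ 2 + 2 * ⟪J s, r v⟫ + ‖r v‖ ^ 2 :=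
      norm_add_sq_real _ _
    rw [hexp, hinner]; ring
  -- bound on the gradient
  have hJnorm : ‖J‖ ≤ Lr := by
    have hlip : LipschitzWith ⟨Lr, hLr.le⟩ r := by
      apply LipschitzWith.of_dist_le_mul
      intro x y
      rw [dist_eq_norm, dist_eq_norm]; exact hA2 x y
    exact norm_fderiv_le_of_lipschitz ℝ hlip
  have hgnorm : ‖g‖ ≤ Lr * ‖J s‖ + γ * ‖s‖ := by
    have h2 : g = -(ContinuousLinearMap.adjoint J (J s) + γ • s) := by
      rw [hg, nlsGrad, ← hJ, hstep]; simp
    rw [h2, norm_neg]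
    calc ‖ContinuousLinearMap.adjoint J (J s) + γ • s‖
        ≤ ‖ContinuousLinearMap.adjoint J (J s)‖ + ‖γ • s‖ := norm_add_le _ _
      _ ≤ Lr * ‖J s‖ + γ * ‖s‖ := by
          gcongr
          · calc ‖ContinuousLinearMap.adjoint J (J s)‖
                ≤ ‖ContinuousLinearMap.adjoint J‖ * ‖J s‖ := (ContinuousLinearMap.adjoint J).le_opNorm _
              _ ≤ Lr * ‖J s‖ := by
                  gcongr
                  rw [LinearIsometryEquiv.norm_map ContinuousLinearMap.adjoint J]; exact hJnorm
          · rw [norm_smul, Real.norm_eq_abs, abs_of_pos hγ]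
  have hkey : ‖g‖ ^ 2 ≤ 2 * (Lr ^ 2 + γmax) * (nlsObj r v - mdl s) := by
    have h1 : ‖g‖ ^ 2 ≤ (Lr * ‖J s‖ + γ * ‖s‖) ^ 2 := by
      have := norm_nonneg g
      nlinarith [norm_nonneg (J s), norm_nonneg s]
    have h2 : (Lr * ‖J s‖ + γ * ‖s‖) ^ 2 ≤ (Lr ^ 2 + γmax) * (‖J s‖ ^ 2 + γ * ‖s‖ ^ 2) := by
      nlinarith [sq_nonneg (‖J s‖ - Lr * ‖s‖), sq_nonneg ‖s‖, norm_nonneg s, norm_nonneg (J s),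
        sq_nonneg (Lr * ‖s‖), mul_nonneg hγ.le (sq_nonneg ‖s‖)]
    rw [hmd]
    nlinarith
  have hη : 0 < η₁ := hη₁.1
  calc η₁ * ‖g‖ ^ 2 / (2 * (Lr ^ 2 + γmax)) ≤ η₁ * (nlsObj r v - mdl s) := by
        rw [div_le_iff₀ (by positivity)]
        calc η₁ * ‖g‖ ^ 2 ≤ η₁ * (2 * (Lr ^ 2 + γmax) * (nlsObj r v - mdl s)) := by
              exact mul_le_mul_of_nonneg_left hkey hη.le
          _ = η₁ * (nlsObj r v - mdl s) * (2 * (Lr ^ 2 + γmax)) := by ring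
    _ ≤ nlsObj r v - nlsObj r (v + s) := hsucc
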